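/- Let M : Matrix (Fin m) (Fin m) ℝ be invertible and let P = {b : Fin m → ℝ | bl ≤ b ∧ b ≤ bu ∧ 0 ≤ M.mulVec b}. If b* is an extreme point of P (b* ∈ Set.extremePoints ℝ P) and bl i < b* i and b* i < bu i for every index i, then b* = 0. (Consequently, any extreme-point optimal scenario of the scenario LP over P_B that is a middle scenario must be the zero vector.) -/

import Mathlib

open Matrix

theorem middle_extreme_point_of_scenario_polyhedron_is_zero
    (m : ℕ) (bl bu : Fin m → ℝ) (hb : bl ≤ bu)
    (M : Matrix (Fin m) (Fin m) ℝ) (hM : IsUnit M.det)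
    (bstar : Fin m → ℝ)
    (hext : bstar ∈ Set.extremePoints ℝ
      {b : Fin m → ℝ | bl ≤ b ∧ b ≤ bu ∧ 0 ≤ M.mulVec b})
    (hmiddle : ∀ i : Fin m, bl i < bstar i ∧ bstar i < bu i) :
    bstar = 0 := by
  rcases Nat.eq_zero_or_pos m with hm | hm
  · subst hm; funext i; exact i.elim0
  haveI : Nonempty (Fin m) := ⟨⟨0, hm⟩⟩
  obtain ⟨hP, hex⟩ := hext
  -- gap
  set s : Finset ℝ :=
    Finset.univ.image fun i => min (bstar i - bl i) (bu i - bstar i) with hs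
  have hsne : s.Nonempty := Finset.Nonempty.image Finset.univ_nonempty _
  set δ : ℝ := s.min' hsne with hδ
  have hδpos : 0 < δ := by
    apply (Finset.lt_min'_iff s hsne).2
    intro y hy
    simp only [hs, Finset.mem_image, Finset.mem_univ, true_and] at hy
    obtain ⟨i, rfl⟩ := hy
    exact lt_min (by linarith [(hmiddle i).1]) (by linarith [(hmiddle i).2])
  have hδle : ∀ i, δ ≤ min (bstar i - bl i) (bu i - bstar i) := fun i =>
    Finset.min'_le s _ (Finset.mem_image.2 ⟨i, Finset.mem_univ i, rfl⟩)
  set ε : ℝ := min (1/2) (δ / (‖bstar‖ + 1)) with hε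
  have hnorm : (0:ℝ) < ‖bstar‖ + 1 := by positivity
  have hεpos : 0 < ε := lt_min (by norm_num) (div_pos hδpos hnorm)
  have hεle : ε ≤ 1/2 := min_le_left _ _
  have hkey : ∀ i, ε * |bstar i| < δ := by
    intro i
    have h1 : |bstar i| ≤ ‖bstar‖ := norm_le_pi_norm bstar i
    have h2 : ε ≤ δ / (‖bstar‖ + 1) := min_le_right _ _
    calc ε * |bstar i| ≤ (δ / (‖bstar‖ + 1)) * ‖bstar‖ := by
          apply mul_le_mul h2 h1 (abs_nonneg _) (le_of_lt (div_pos hδpos hnorm))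
      _ < δ := by
          rw [div_mul_eq_mul_div, div_lt_iff₀ hnorm]
          nlinarith
  have hbox : ∀ (t : ℝ), |t| ≤ ε → bl ≤ bstar + t • bstar ∧ bstar + t • bstar ≤ bu := by
    intro t ht
    have hcomp : ∀ i, |t * bstar i| < δ := by
      intro i
      rw [abs_mul]
      calc |t| * |bstar i| ≤ ε * |bstar i| :=
            mul_le_mul_of_nonneg_right ht (abs_nonneg _)
        _ < δ := hkey i
    constructor <;> intro i <;>
      simp only [Pi.add_apply, Pi.smul_apply, smul_eq_mul]
    · have := hcomp i
      have h2 := (hδle i).trans (min_le_left _ _)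
      have := abs_lt.1 this
      linarith
    · have := hcomp i
      have h2 := (hδle i).trans (min_le_right _ _)
      have := abs_lt.1 this
      linarith
  have hmem : ∀ (t : ℝ), |t| ≤ ε → (bstar + t • bstar) ∈
      {b : Fin m → ℝ | bl ≤ b ∧ b ≤ bu ∧ 0 ≤ M.mulVec b} := by
    intro t ht
    refine ⟨(hbox t ht).1, (hbox t ht).2, ?_⟩
    have h1t : 0 ≤ 1 + t := by
      have := abs_le.1 ht; linarith
    have : bstar + t • bstar = (1 + t) • bstar := by
      rw [add_smul, one_smul]
    rw [this, mulVec_smul]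
    intro i
    simp only [Pi.smul_apply, smul_eq_mul, Pi.zero_apply]
    exact mul_nonneg h1t (hP.2.2 i)
  have hx := hmem (-ε) (by rw [abs_neg, abs_of_pos hεpos])
  have hy := hmem ε (by rw [abs_of_pos hεpos])
  have hseg : bstar ∈ openSegment ℝ (bstar + (-ε) • bstar) (bstar + ε • bstar) := by
    refine ⟨1/2, 1/2, by norm_num, by norm_num, by norm_num, ?_⟩
    ext i
    simp only [Pi.add_apply, Pi.smul_apply, smul_eq_mul]
    ring
  have := hex hx hy hseg
  have h0 : (-ε) • bstar = 0 := by
    have := congrArg (fun v => v - bstar) this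
    simpa using this
  have := smul_eq_zero.1 h0
  rcases this with h | h
  · exact absurd h (by simp; linarith)
  · exact h
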